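/- Let G be a topological group, let C ⊆ G satisfy C ⊆ closure(interior(C)) (C is almost regular), and let E ⊆ G satisfy E · C ⊆ E. Let Ẽ ⊆ G be an open set such that E ∩ Ẽ is dense in Ẽ and interior(E) ⊆ Ẽ. Then Ẽ · closure(C) ⊆ Ẽ. -/

import Mathlib

/-- Let `G` be a topological group, `C ⊆ G` almost regular (`C ⊆ closure (interior C)`)
and `E ⊆ G` with `E · C ⊆ E`. If `Ẽ` is an open set such that `E ∩ Ẽ` is dense in `Ẽ`
and `interior E ⊆ Ẽ`, then `Ẽ · closure C ⊆ Ẽ`. -/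
theorem representative_closure_cone_property
    {G : Type*} [Group G] [TopologicalSpace G] [IsTopologicalGroup G]
    (C E Etil : Set G)
    (hC : C ⊆ closure (interior C))
    (hEC : ∀ x ∈ E, ∀ c ∈ C, x * c ∈ E)
    (hopen : IsOpen Etil)
    (hdense : Etil ⊆ closure (E ∩ Etil))
    (hint : interior E ⊆ Etil) :
    ∀ x ∈ Etil, ∀ c ∈ closure C, x * c ∈ Etil := by
  intro x hx c hc
  -- `c` lies in the closure of `interior C`
  have hc' : c ∈ closure (interior C) := by
    have := closure_mono hC hc
    rwa [closure_closure] at this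
  -- Step 1: find `u ∈ interior C` with `x * c * u⁻¹ ∈ Etil`
  have hO : IsOpen {u : G | x * c * u⁻¹ ∈ Etil} :=
    hopen.preimage (by continuity)
  have hcO : c ∈ {u : G | x * c * u⁻¹ ∈ Etil} := by
    simpa [mul_inv_cancel_right] using hx
  obtain ⟨u, huO, huC⟩ := mem_closure_iff.mp hc' _ hO hcO
  set y : G := x * c * u⁻¹ with hy
  have hyE : y ∈ Etil := huO
  -- Step 2: find `e ∈ E ∩ Etil` with `e⁻¹ * (x * c) ∈ interior C`
  have hO' : IsOpen (Etil ∩ {g : G | g⁻¹ * (x * c) ∈ interior C}) :=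
    hopen.inter (isOpen_interior.preimage (by continuity))
  have hyO' : y ∈ Etil ∩ {g : G | g⁻¹ * (x * c) ∈ interior C} := by
    refine ⟨hyE, ?_⟩
    have : y⁻¹ * (x * c) = u := by
      simp [hy]
      group
    simpa [this] using huC
  obtain ⟨e, heO', heE, heEtil⟩ :=
    mem_closure_iff.mp (hdense hyE) _ hO' hyO'
  have hv : e⁻¹ * (x * c) ∈ interior C := heO'.2
  -- Step 3: `x * c ∈ e • interior C ⊆ E`, an open set, hence `x * c ∈ interior E ⊆ Etil`
  have himg : IsOpen ((fun g => e * g) '' interior C) :=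
    (isOpenMap_mul_left e) _ isOpen_interior
  have hsub : (fun g => e * g) '' interior C ⊆ E := by
    rintro _ ⟨w, hw, rfl⟩
    exact hEC e heE w (interior_subset hw)
  have hmem : x * c ∈ (fun g => e * g) '' interior C :=
    ⟨e⁻¹ * (x * c), hv, by group⟩
  exact hint (interior_maximal hsub himg hmem)
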